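/- Let (X, Y) be random variables with Y not almost surely constant, and define ξ(X,Y) = (∫ Var(E[1_{Y ≥ t} | X]) dμ(t)) / (∫ Var(1_{Y ≥ t}) dμ(t)) where μ is the law of Y. If X and Y are independent, then ξ(X,Y) = 0. -/

import Mathlib

open MeasureTheory ProbabilityTheory

lemma var_zero_of_ae_const {Ω : Type*} [MeasureSpace Ω] [IsProbabilityMeasure (ℙ : Measure Ω)]
    (f : Ω → ℝ) (c : ℝ) (h : f =ᵐ[ℙ] fun _ => c) : variance f ℙ = 0 := by
  have hμf : (ℙ : Measure Ω)[f] = c := by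
    rw [integral_congr_ae h]; simp
  have : evariance f ℙ = 0 := by
    rw [evariance]
    rw [lintegral_eq_zero_iff' (((aemeasurable_const.congr h.symm).sub_const _).enorm.pow_const _)]
    filter_upwards [h] with ω hω
    simp [hω, hμf]
  simp [variance, this]

/-- If `X` and `Y` are independent (and `Y` is not a.s. constant, so the
denominator is positive), then Chatterjee's coefficient `ξ(X,Y) = 0`. -/
theorem stmt_5 {Ω : Type*} [MeasureSpace Ω] [IsProbabilityMeasure (ℙ : Measure Ω)]
    (X Y : Ω → ℝ) (hX : Measurable X) (hY : Measurable Y)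
    (hden : 0 < ∫ t, variance (fun ω => if t ≤ Y ω then (1 : ℝ) else 0) ℙ
      ∂(Measure.map Y ℙ))
    (hindep : IndepFun X Y ℙ) :
    (∫ t, variance (ℙ[fun ω => if t ≤ Y ω then (1 : ℝ) else 0
            | MeasurableSpace.comap X inferInstance]) ℙ ∂(Measure.map Y ℙ))
        / (∫ t, variance (fun ω => if t ≤ Y ω then (1 : ℝ) else 0) ℙ
            ∂(Measure.map Y ℙ)) = 0 := by
  have hnum : ∀ t : ℝ, variance (ℙ[fun ω => if t ≤ Y ω then (1 : ℝ) else 0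
      | MeasurableSpace.comap X inferInstance]) ℙ = 0 := by
    intro t
    have hf : StronglyMeasurable[MeasurableSpace.comap Y inferInstance]
        (fun ω => if t ≤ Y ω then (1 : ℝ) else 0) := by
      have : MeasurableSet[MeasurableSpace.comap Y inferInstance] {ω | t ≤ Y ω} :=
        ⟨Set.Ici t, measurableSet_Ici, rfl⟩
      have heq : (fun ω => if t ≤ Y ω then (1 : ℝ) else 0)
          = Set.indicator {ω | t ≤ Y ω} (fun _ => (1 : ℝ)) := by
        funext ω; by_cases h : t ≤ Y ω <;> simp [Set.indicator, h]
      rw [heq]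
      exact stronglyMeasurable_const.indicator this
    have hce := condExp_indep_eq (μ := ℙ) hY.comap_le hX.comap_le hf hindep.symm
    exact var_zero_of_ae_const _ _ hce
  have : (∫ t, variance (ℙ[fun ω => if t ≤ Y ω then (1 : ℝ) else 0
      | MeasurableSpace.comap X inferInstance]) ℙ ∂(Measure.map Y ℙ)) = 0 := by
    simp [hnum]
  rw [this, zero_div]
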